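/- Let φ : [0,∞) → ℝ be twice continuously differentiable with φ'' decreasing on [0,∞). Define c(t) = φ''(0) if t = 0 and c(t) = 2(φ(0) - φ(t) + φ'(t)·t)/t² otherwise. Then for every x ≥ 0 and t ≥ 0, φ(x) ≤ φ(t) + φ'(t)(x - t) + (1/2)c(t)(x - t)². -/

import Mathlib

open Set

/-- Quadratic majorant lemma: if `φ` is `C²` with nonincreasing second derivative
on `[0,∞)`, then with curvature `c(t) = φ''(0)` for `t = 0` and
`c(t) = 2(φ(0) - φ(t) + φ'(t)·t)/t²` for `t > 0`, one has
`φ(x) ≤ φ(t) + φ'(t)(x - t) + (1/2) c(t) (x - t)²` for all `x, t ≥ 0`. -/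
theorem quadratic_majorant (φ : ℝ → ℝ) (hφ : ContDiff ℝ 2 φ)
    (hanti : AntitoneOn (deriv (deriv φ)) (Set.Ici 0))
    (c : ℝ → ℝ) (hc0 : c 0 = deriv (deriv φ) 0)
    (hct : ∀ t : ℝ, 0 < t → c t = 2 * (φ 0 - φ t + deriv φ t * t) / t ^ 2) :
    ∀ x : ℝ, 0 ≤ x → ∀ t : ℝ, 0 ≤ t →
      φ x ≤ φ t + deriv φ t * (x - t) + (1 / 2) * c t * (x - t) ^ 2 := by
  intro x hx t ht
  have hφd : Differentiable ℝ φ := hφ.differentiable (by norm_num)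
  have hD1 : ContDiff ℝ 1 (deriv φ) := by
    have h2 : ContDiff ℝ ((1 : ℕ) + 1) φ := by exact_mod_cast hφ
    exact (contDiff_succ_iff_deriv.mp h2).2.2
  have hDd : Differentiable ℝ (deriv φ) := hD1.differentiable (by norm_num)
  set a := deriv φ t with ha
  set k := c t with hk
  set g : ℝ → ℝ := fun y => φ t + a * (y - t) + 1 / 2 * k * (y - t) ^ 2 - φ y with hgdef
  set h : ℝ → ℝ := fun y => a + k * (y - t) - deriv φ y with hhdef
  have hg : ∀ y, HasDerivAt g (h y) y := by
    intro y
    have h1 : HasDerivAt (fun y : ℝ => y - t) 1 y := (hasDerivAt_id y).sub_const t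
    have h2 : HasDerivAt (fun y : ℝ => (y - t) ^ 2) (2 * (y - t)) y := by
      simpa using h1.fun_pow 2
    have h3 : HasDerivAt (fun y : ℝ => 1 / 2 * k * (y - t) ^ 2)
        (1 / 2 * k * (2 * (y - t))) y := h2.const_mul _
    have h4 : HasDerivAt (fun y : ℝ => a * (y - t)) a y := by simpa using h1.const_mul a
    have := ((h4.const_add (φ t)).fun_add h3).fun_sub (hφd y).hasDerivAt
    refine this.congr_deriv ?_
    simp only [hhdef]; ring
  have hh : ∀ y, HasDerivAt h (k - deriv (deriv φ) y) y := by
    intro y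
    have h1 : HasDerivAt (fun y : ℝ => y - t) 1 y := (hasDerivAt_id y).sub_const t
    have h4 : HasDerivAt (fun y : ℝ => k * (y - t)) k y := by simpa using h1.const_mul k
    exact (h4.const_add a).sub (hDd y).hasDerivAt
  have hgd : Differentiable ℝ g := fun y => (hg y).differentiableAt
  have hhd : Differentiable ℝ h := fun y => (hh y).differentiableAt
  have hderivg : deriv g = h := funext fun y => (hg y).deriv
  have hht : h t = 0 := by simp [hhdef, ha]
  have hgt : g t = 0 := by simp [hgdef]
  suffices hmain : 0 ≤ g x by
    have heq : g x = φ t + a * (x - t) + 1 / 2 * k * (x - t) ^ 2 - φ x := rfl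
    rw [heq] at hmain
    linarith
  rcases eq_or_lt_of_le ht with hteq | htpos
  · -- t = 0
    have hk0 : k = deriv (deriv φ) 0 := by rw [hk, ← hteq, hc0]
    have hmono : MonotoneOn h (Ici (0:ℝ)) := by
      refine monotoneOn_of_deriv_nonneg (convex_Ici 0) hhd.continuous.continuousOn
        hhd.differentiableOn ?_
      rw [interior_Ici]
      intro y hy
      rw [(hh y).deriv, hk0]
      have := hanti (self_mem_Ici) (mem_Ici.mpr (le_of_lt hy)) (le_of_lt hy)
      linarith
    have hpos : ∀ y ∈ Ioi (0:ℝ), 0 ≤ deriv g y := by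
      intro y hy
      rw [hderivg]
      have := hmono self_mem_Ici (mem_Ici.mpr (le_of_lt hy)) (le_of_lt hy)
      rw [← hteq] at hht
      linarith
    have hgmono : MonotoneOn g (Ici (0:ℝ)) := by
      refine monotoneOn_of_deriv_nonneg (convex_Ici 0) hgd.continuous.continuousOn
        hgd.differentiableOn ?_
      rw [interior_Ici]; exact hpos
    have := hgmono self_mem_Ici hx hx
    rw [← hteq] at hgt
    linarith
  · -- t > 0
    have hg0 : g 0 = 0 := by
      have hkval : k * t ^ 2 = 2 * (φ 0 - φ t + a * t) := by
        rw [hk, hct t htpos, ha]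
        field_simp
      have heq : g 0 = φ t + a * (0 - t) + 1 / 2 * k * (0 - t) ^ 2 - φ 0 := rfl
      rw [heq]; nlinarith [hkval]
    obtain ⟨ξ, hξmem, hξ0⟩ := exists_deriv_eq_zero htpos (hgd.continuous.continuousOn)
      (hg0.trans hgt.symm)
    rw [hderivg] at hξ0
    obtain ⟨hξpos, hξlt⟩ := hξmem
    have hconv : ConvexOn ℝ (Ici 0) h := by
      refine MonotoneOn.convexOn_of_deriv (convex_Ici 0) hhd.continuous.continuousOn
        hhd.differentiableOn ?_
      rw [interior_Ici]
      intro u hu v hv huv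
      rw [(hh u).deriv, (hh v).deriv]
      have := hanti (mem_Ici.mpr (le_of_lt hu)) (mem_Ici.mpr (le_of_lt hv)) huv
      linarith
    have hξI : ξ ∈ Ici (0:ℝ) := le_of_lt hξpos
    have htI : t ∈ Ici (0:ℝ) := ht
    have claimA : ∀ y ∈ Icc (0:ℝ) ξ, 0 ≤ h y := by
      intro y hy
      rcases eq_or_lt_of_le hy.2 with rfl | hyξ
      · rw [hξ0]
      · have hs := hconv.slope_mono_adjacent (hy.1 : y ∈ Ici (0:ℝ)) htI hyξ hξlt
        rw [hξ0, hht] at hs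
        have h1 : (0:ℝ) < ξ - y := by linarith
        have h0 : (0 - h y) / (ξ - y) ≤ 0 := by simpa using hs
        have := (div_le_iff₀ h1).mp h0
        linarith [this]
    have claimB : ∀ y ∈ Icc ξ t, h y ≤ 0 := by
      intro y hy
      rcases eq_or_lt_of_le hy.1 with rfl | hξy
      · rw [hξ0]
      rcases eq_or_lt_of_le hy.2 with rfl | hyt
      · rw [hht]
      have hyI : y ∈ Ici (0:ℝ) := le_trans hξI hy.1
      have hs := hconv.slope_mono_adjacent hξI htI hξy hyt
      rw [hξ0, hht] at hs
      have h1 : (0:ℝ) < y - ξ := by linarith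
      have h2 : (0:ℝ) < t - y := by linarith
      rw [sub_zero, zero_sub] at hs
      have := (div_le_div_iff₀ h1 h2).mp hs
      nlinarith
    have claimC : ∀ y, t ≤ y → 0 ≤ h y := by
      intro y hy
      rcases eq_or_lt_of_le hy with rfl | hty
      · rw [hht]
      have hyI : y ∈ Ici (0:ℝ) := le_trans ht (le_of_lt hty)
      have hs := hconv.slope_mono_adjacent hξI hyI hξlt hty
      rw [hξ0, hht] at hs
      have h2 : (0:ℝ) < y - t := by linarith
      have h0 : (0:ℝ) ≤ h y / (y - t) := by simpa using hs
      have := mul_nonneg h0 h2.le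
      rwa [div_mul_cancel₀ _ (ne_of_gt h2)] at this
    -- case analysis on x
    rcases le_or_gt x ξ with hxξ | hxgt
    · have hgmono : MonotoneOn g (Icc (0:ℝ) ξ) := by
        refine monotoneOn_of_deriv_nonneg (convex_Icc 0 ξ) hgd.continuous.continuousOn
          hgd.differentiableOn ?_
        intro y hy
        rw [hderivg]
        rw [interior_Icc] at hy
        exact claimA y ⟨hy.1.le, hy.2.le⟩
      have := hgmono ⟨le_refl 0, hξpos.le⟩ ⟨hx, hxξ⟩ hx
      linarith
    rcases le_or_gt x t with hxt | htx
    · have hganti : AntitoneOn g (Icc ξ t) := by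
        refine antitoneOn_of_deriv_nonpos (convex_Icc ξ t) hgd.continuous.continuousOn
          hgd.differentiableOn ?_
        intro y hy
        rw [hderivg]
        rw [interior_Icc] at hy
        exact claimB y ⟨hy.1.le, hy.2.le⟩
      have := hganti ⟨hxgt.le, hxt⟩ ⟨hξlt.le, le_refl t⟩ hxt
      linarith
    · have hgmono : MonotoneOn g (Ici t) := by
        refine monotoneOn_of_deriv_nonneg (convex_Ici t) hgd.continuous.continuousOn
          hgd.differentiableOn ?_
        intro y hy
        rw [hderivg]
        rw [interior_Ici] at hy
        exact claimC y hy.le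
      have := hgmono self_mem_Ici htx.le htx.le
      linarith
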